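/- Every minimal generating set of A₅ has at most 3 elements. (A generating set S is minimal if no proper subset of S generates.) -/

import Mathlib

open Subgroup Equiv

private abbrev GA := alternatingGroup (Fin 5)

private lemma cardGA : Nat.card GA = 60 := by
  have h := two_mul_card_alternatingGroup (α := Fin 5)
  rw [Fintype.card_perm, Fintype.card_fin] at h
  have h5 : Nat.factorial 5 = 120 := by norm_num [Nat.factorial]
  rw [h5] at h
  rw [Nat.card_eq_fintype_card]
  show Fintype.card (alternatingGroup (Fin 5)) = 60
  omega

private lemma index_ge_five (H : Subgroup GA) (hH : H ≠ ⊤) : ¬ H.index ≤ 4 := by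
  intro hle
  classical
  let φ := MulAction.toPermHom GA (GA ⧸ H)
  have hker : φ.ker = ⊥ := by
    rcases IsSimpleGroup.eq_bot_or_eq_top_of_normal φ.ker inferInstance with h | h
    · exact h
    · exfalso
      apply hH
      rw [eq_top_iff]
      intro g _
      have hg : φ g = 1 := by
        rw [← MonoidHom.mem_ker, h]; trivial
      have h1 : φ g ((1:GA) : GA ⧸ H) = ((1:GA) : GA ⧸ H) := by rw [hg]; rfl
      have h2 : ((g * 1 : GA) : GA ⧸ H) = ((1:GA) : GA ⧸ H) := h1
      rw [mul_one] at h2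
      have h3 : g⁻¹ * 1 ∈ H := QuotientGroup.eq.mp h2
      rw [mul_one] at h3
      exact (inv_mem_iff).mp h3
  have hinj : Function.Injective φ := (MonoidHom.ker_eq_bot_iff φ).mp hker
  have hdvd : Nat.card GA ∣ Nat.card (Perm (GA ⧸ H)) := Subgroup.card_dvd_of_injective φ hinj
  have : Fintype (GA ⧸ H) := Fintype.ofFinite _
  have hp : Nat.card (Perm (GA ⧸ H)) = Nat.factorial H.index := by
    rw [Nat.card_eq_fintype_card, Fintype.card_perm]
    congr 1
    rw [← Nat.card_eq_fintype_card, ← Subgroup.index_eq_card]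
  rw [hp, cardGA] at hdvd
  have h24 : Nat.factorial H.index ≤ 24 := by
    calc Nat.factorial H.index ≤ Nat.factorial 4 := Nat.factorial_le hle
    _ = 24 := by norm_num [Nat.factorial]
  have := Nat.le_of_dvd (Nat.factorial_pos _) hdvd
  omega

private lemma fact60 : (60:ℕ).factorization 3 = 1 := by
  rw [show (60:ℕ) = 3 * 20 by norm_num, Nat.factorization_mul (by norm_num) (by norm_num)]
  rw [Finsupp.add_apply, Nat.Prime.factorization (by norm_num),
    Nat.factorization_eq_zero_of_not_dvd (by norm_num)]
  simp

private lemma no_normalizer_twelve (P H : Subgroup GA) (hP : Nat.card P = 3)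
    (hH : Nat.card H = 12) (hle : H ≤ normalizer (P : Set GA)) : False := by
  obtain ⟨n, hn⟩ : ∃ n, n = Nat.card (normalizer (P : Set GA)) := ⟨_, rfl⟩
  have hdvd1 : (12:ℕ) ∣ n := by
    have h := Subgroup.card_dvd_of_le hle; rw [hH] at h; rwa [hn]
  have hdvd2 : n ∣ 60 := by
    rw [hn, ← cardGA]; exact Subgroup.card_subgroup_dvd_card _
  have hle60 : n ≤ 60 := Nat.le_of_dvd (by norm_num) hdvd2
  have hpos : 0 < n := by rw [hn]; exact Nat.card_pos
  have h12 : n = 12 ∨ n = 24 ∨ n = 36 ∨ n = 48 ∨ n = 60 := by omega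
  have hcard : n = 12 ∨ n = 60 := by
    rcases h12 with h | h | h | h | h
    · exact Or.inl h
    · rw [h] at hdvd2; norm_num at hdvd2
    · rw [h] at hdvd2; norm_num at hdvd2
    · rw [h] at hdvd2; norm_num at hdvd2
    · exact Or.inr h
  rcases hcard with hc | hc
  · -- normalizer has card 12, P is a Sylow 3-subgroup, index of normalizer is 5
    haveI : Fact (Nat.Prime 3) := ⟨by norm_num⟩
    let P' : Sylow 3 GA := Sylow.ofCard P (by rw [hP, cardGA, fact60, pow_one])
    have hco : (P' : Subgroup GA) = P := Sylow.coe_ofCard P _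
    have hmi : Nat.card (normalizer ((P : Subgroup GA) : Set GA)) * (normalizer ((P : Subgroup GA) : Set GA)).index
        = Nat.card GA := Subgroup.card_mul_index _
    rw [← hn] at hmi; rw [hc, cardGA] at hmi
    have hidx : (normalizer ((P : Subgroup GA) : Set GA)).index = 5 := by omega
    have hcs : Nat.card (Sylow 3 GA) = 5 := by
      rw [Sylow.card_eq_index_normalizer P']
      change (normalizer ((P' : Subgroup GA) : Set GA)).index = 5
      rw [hco, hidx]
    have hmod := card_sylow_modEq_one 3 GA
    rw [hcs] at hmod
    have : (5:ℕ) % 3 = 1 % 3 := hmod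
    omega
  · -- normalizer = ⊤, so P is normal, contradicting simplicity
    have htop : normalizer (P : Set GA) = ⊤ := Subgroup.eq_top_of_card_eq _ (by rw [← hn, hc, cardGA])
    have hnorm : P.Normal := Subgroup.normalizer_eq_top_iff.mp htop
    rcases IsSimpleGroup.eq_bot_or_eq_top_of_normal P hnorm with h | h
    · rw [h, Subgroup.card_bot] at hP; norm_num at hP
    · rw [h, Subgroup.card_top, cardGA] at hP; norm_num at hP

private lemma fact6 : (6:ℕ).factorization 3 = 1 := by
  rw [show (6:ℕ) = 3 * 2 by norm_num, Nat.factorization_mul (by norm_num) (by norm_num)]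
  rw [Finsupp.add_apply, Nat.Prime.factorization (by norm_num),
    Nat.factorization_eq_zero_of_not_dvd (by norm_num)]
  simp

private lemma unique_three (K : Subgroup GA) (hK : Nat.card K = 6)
    {P Q : Subgroup GA} (hPK : P ≤ K) (hQK : Q ≤ K)
    (hP : Nat.card P = 3) (hQ : Nat.card Q = 3) : P = Q := by
  haveI : Fact (Nat.Prime 3) := ⟨by norm_num⟩
  have hfK : (Nat.card K).factorization 3 = 1 := by rw [hK]; exact fact6
  have hcP : Nat.card (P.subgroupOf K) = 3 ^ (Nat.card K).factorization 3 := by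
    rw [hfK, pow_one, ← hP]
    exact Nat.card_congr (Subgroup.subgroupOfEquivOfLe hPK).toEquiv
  have hcQ : Nat.card (Q.subgroupOf K) = 3 ^ (Nat.card K).factorization 3 := by
    rw [hfK, pow_one, ← hQ]
    exact Nat.card_congr (Subgroup.subgroupOfEquivOfLe hQK).toEquiv
  let P' : Sylow 3 K := Sylow.ofCard _ hcP
  let Q' : Sylow 3 K := Sylow.ofCard _ hcQ
  have hidx : (P.subgroupOf K).index = 2 := by
    have h := Subgroup.card_mul_index (P.subgroupOf K)
    rw [hcP, hfK, pow_one, hK] at h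
    omega
  have hn1 : Nat.card (Sylow 3 K) = 1 := by
    have hdvd := Sylow.card_dvd_index P'
    have hco : (P' : Subgroup K) = P.subgroupOf K := Sylow.coe_ofCard _ _
    rw [hco, hidx] at hdvd
    have hle2 := Nat.le_of_dvd (by norm_num) hdvd
    have hpos : 0 < Nat.card (Sylow 3 K) := Nat.card_pos
    have hmod : Nat.card (Sylow 3 K) % 3 = 1 % 3 := card_sylow_modEq_one 3 K
    omega
  haveI : Subsingleton (Sylow 3 K) := (Nat.card_eq_one_iff_unique.mp hn1).1
  have hPQ' : P' = Q' := Subsingleton.elim _ _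
  have hPQ : P.subgroupOf K = Q.subgroupOf K := by
    have := congrArg (fun (R : Sylow 3 K) => (R : Subgroup K)) hPQ'
    simpa [P', Q', Sylow.coe_ofCard] using this
  have hmap := congrArg (Subgroup.map K.subtype) hPQ
  rwa [Subgroup.subgroupOf_map_subtype, Subgroup.subgroupOf_map_subtype,
    inf_eq_left.mpr hPK, inf_eq_left.mpr hQK] at hmap

private lemma conj_mem_of_index_two {Γ : Type*} [Group Γ] (K : Subgroup Γ) (h2 : K.index = 2)
    (g k : Γ) (hk : k ∈ K) : g * k * g⁻¹ ∈ K := by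
  rw [Subgroup.mul_mem_iff_of_index_two h2, Subgroup.mul_mem_iff_of_index_two h2]
  simp [hk]

private lemma no_card_eq (H : Subgroup GA) (n : ℕ) (hn : n = 15 ∨ n = 20 ∨ n = 30)
    (hH : Nat.card H = n) : False := by
  have hmi : Nat.card H * H.index = Nat.card GA := Subgroup.card_mul_index H
  rw [cardGA, hH] at hmi
  rcases hn with rfl | rfl | rfl
  all_goals
    exact index_ge_five H
      (fun h => by rw [h, Subgroup.card_top, cardGA] at hH; omega)
      (by omega)

private lemma no_six_in_twelve (K H : Subgroup GA) (hKH : K ≤ H)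
    (hK : Nat.card K = 6) (hH : Nat.card H = 12) : False := by
  haveI : Fintype K := Fintype.ofFinite _
  obtain ⟨g, hg⟩ := exists_prime_orderOf_dvd_card (G := K) 3
    (by rw [← Nat.card_eq_fintype_card, hK]; norm_num)
  set P : Subgroup GA := Subgroup.zpowers (g : GA) with hPdef
  have hP3 : Nat.card P = 3 := by rw [hPdef, Nat.card_zpowers, Subgroup.orderOf_coe, hg]
  have hPK : P ≤ K := by rw [hPdef, Subgroup.zpowers_le]; exact g.2
  -- K has index two in H
  have hidx2 : (K.subgroupOf H).index = 2 := by
    have h := Subgroup.card_mul_index (K.subgroupOf H)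
    have hcK : Nat.card (K.subgroupOf H) = 6 := by
      rw [← hK]; exact Nat.card_congr (Subgroup.subgroupOfEquivOfLe hKH).toEquiv
    rw [hcK, hH] at h
    omega
  have hconjK : ∀ h ∈ H, ∀ k ∈ K, h * k * h⁻¹ ∈ K := by
    intro h hh k hk
    have := conj_mem_of_index_two (K.subgroupOf H) hidx2 ⟨h, hh⟩ ⟨k, hKH hk⟩
      (by rwa [Subgroup.mem_subgroupOf])
    rwa [Subgroup.mem_subgroupOf] at this
  apply no_normalizer_twelve P H hP3 hH
  intro h hh
  rw [Subgroup.mem_normalizer_iff]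
  -- the conjugate of P by h equals P
  set Pc : Subgroup GA := P.map (MulAut.conj h).toMonoidHom with hPc
  have hPc3 : Nat.card Pc = 3 := by
    rw [← hP3]
    exact (Nat.card_congr (Subgroup.equivMapOfInjective P _
      (MulAut.conj h).toEquiv.injective).toEquiv).symm
  have hPcK : Pc ≤ K := by
    rintro u ⟨p, hp, rfl⟩
    exact hconjK h hh p (hPK hp)
  have hPPc : P = Pc := unique_three K hK hPK hPcK hP3 hPc3
  intro p
  constructor
  · intro hp
    have : h * p * h⁻¹ ∈ Pc := ⟨p, hp, rfl⟩
    rwa [← hPPc] at this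
  · intro hp
    rw [hPPc] at hp
    rcases hp with ⟨q, hq, hqe⟩
    have : q = p := by
      have : (MulAut.conj h) q = h * p * h⁻¹ := hqe
      rw [MulAut.conj_apply] at this
      have := mul_right_cancel this
      exact mul_left_cancel this
    rwa [← this]

private lemma notin_mono {a : GA} {s t : Set GA}
    (h : a ∉ Subgroup.closure s) (hts : t ⊆ s) : a ∉ Subgroup.closure t :=
  fun hm => h (Subgroup.closure_mono hts hm)

set_option maxHeartbeats 1000000 in
private lemma crunch60 : ∀ n1 ∈ Nat.divisors 60, ∀ n2 ∈ Nat.divisors 60, ∀ n3 ∈ Nat.divisors 60,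
    ∀ n4 ∈ Nat.divisors 60, 2 ≤ n1 → n1 < n2 → n2 < n3 → n3 < n4 →
    n1 ∣ n2 → n2 ∣ n3 → n3 ∣ n4 → n3 ≠ 15 → n3 ≠ 20 → n3 ≠ 30 →
    ((n1 = 2 ∨ n1 = 3) ∧ (n2 = 4 ∨ n2 = 6) ∧ n3 = 12 ∧ n4 = 60) := by decide

private lemma card_lt_of_lt {H K : Subgroup GA} (h : H < K) : Nat.card H < Nat.card K := by
  have e1 : Nat.card H = (H : Set GA).ncard := Nat.card_coe_set_eq _
  have e2 : Nat.card K = (K : Set GA).ncard := Nat.card_coe_set_eq _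
  rw [e1, e2]
  exact Set.ncard_lt_ncard (SetLike.coe_ssubset_coe.mpr h) (Set.toFinite _)

private lemma chain4 (x y z w : GA)
    (h1 : x ∉ Subgroup.closure {y, z, w}) (h2 : y ∉ Subgroup.closure {x, z, w})
    (h3 : z ∉ Subgroup.closure {x, y, w}) (h4 : w ∉ Subgroup.closure {x, y, z}) :
    (orderOf x = 2 ∨ orderOf x = 3) ∧
    (Nat.card (Subgroup.closure {x, y} : Subgroup GA) = 4 ∨
      Nat.card (Subgroup.closure {x, y} : Subgroup GA) = 6) ∧
    Nat.card (Subgroup.closure {x, y, z} : Subgroup GA) = 12 := by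
  set C1 := Subgroup.closure {x} with hC1
  set C2 := Subgroup.closure {x, y} with hC2
  set C3 := Subgroup.closure {x, y, z} with hC3
  set C4 := Subgroup.closure {x, y, z, w} with hC4
  have hxC : x ∈ C1 := Subgroup.subset_closure rfl
  have l12 : C1 ≤ C2 := Subgroup.closure_mono (by intro u hu; simp at hu ⊢; tauto)
  have l23 : C2 ≤ C3 := Subgroup.closure_mono (by intro u hu; simp at hu ⊢; tauto)
  have l34 : C3 ≤ C4 := Subgroup.closure_mono (by intro u hu; simp at hu ⊢; tauto)
  have s1 : ⊥ < C1 := by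
    rw [bot_lt_iff_ne_bot]
    intro hb
    apply h1
    have : x ∈ (⊥ : Subgroup GA) := hb ▸ hxC
    rw [Subgroup.mem_bot] at this
    rw [this]
    exact Subgroup.one_mem _
  have s2 : C1 < C2 := lt_of_le_of_ne l12 (fun he => by
    apply h2
    have hy : y ∈ C2 := Subgroup.subset_closure (by simp)
    rw [← he] at hy
    exact Subgroup.closure_mono (by intro u hu; simp at hu ⊢; tauto) hy)
  have s3 : C2 < C3 := lt_of_le_of_ne l23 (fun he => by
    apply h3
    have hz : z ∈ C3 := Subgroup.subset_closure (by simp)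
    rw [← he] at hz
    exact Subgroup.closure_mono (by intro u hu; simp at hu ⊢; tauto) hz)
  have s4 : C3 < C4 := lt_of_le_of_ne l34 (fun he => by
    apply h4
    have hw : w ∈ C4 := Subgroup.subset_closure (by simp)
    rw [← he] at hw
    exact hw)
  have c1 : 1 < Nat.card C1 := by
    have := card_lt_of_lt s1
    rwa [Subgroup.card_bot] at this
  have c2 := card_lt_of_lt s2
  have c3 := card_lt_of_lt s3
  have c4 := card_lt_of_lt s4
  have d12 : Nat.card C1 ∣ Nat.card C2 := Subgroup.card_dvd_of_le l12
  have d23 : Nat.card C2 ∣ Nat.card C3 := Subgroup.card_dvd_of_le l23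
  have d34 : Nat.card C3 ∣ Nat.card C4 := Subgroup.card_dvd_of_le l34
  have d60 : Nat.card C4 ∣ 60 := by rw [← cardGA]; exact Subgroup.card_subgroup_dvd_card _
  have hmem : ∀ (C : Subgroup GA), Nat.card C ∈ Nat.divisors 60 := by
    intro C
    rw [Nat.mem_divisors]
    exact ⟨by rw [← cardGA]; exact Subgroup.card_subgroup_dvd_card _, by norm_num⟩
  have hno : Nat.card C3 ≠ 15 ∧ Nat.card C3 ≠ 20 ∧ Nat.card C3 ≠ 30 := by
    refine ⟨fun h => ?_, fun h => ?_, fun h => ?_⟩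
    · exact no_card_eq C3 15 (by tauto) h
    · exact no_card_eq C3 20 (by tauto) h
    · exact no_card_eq C3 30 (by tauto) h
  have := crunch60 (Nat.card C1) (hmem C1) (Nat.card C2) (hmem C2) (Nat.card C3) (hmem C3)
    (Nat.card C4) (hmem C4) c1 c2 c3 c4 d12 d23 d34 hno.1 hno.2.1 hno.2.2
  refine ⟨?_, this.2.1, this.2.2.1⟩
  have hord : Nat.card C1 = orderOf x := by
    rw [hC1, ← Subgroup.zpowers_eq_closure, Nat.card_zpowers]
  rw [hord] at this
  exact this.1

private lemma pair_not_both_three (a b : GA) (ha : orderOf a = 3) (hb : orderOf b = 3)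
    (m : Nat.card (Subgroup.closure {a, b} : Subgroup GA) = 4 ∨
      Nat.card (Subgroup.closure {a, b} : Subgroup GA) = 6) : False := by
  have haK : Subgroup.zpowers a ≤ Subgroup.closure {a, b} := by
    rw [Subgroup.zpowers_le]
    exact Subgroup.subset_closure (by simp)
  have hbK : Subgroup.zpowers b ≤ Subgroup.closure {a, b} := by
    rw [Subgroup.zpowers_le]
    exact Subgroup.subset_closure (by simp)
  have hca : Nat.card (Subgroup.zpowers a) = 3 := by rw [Nat.card_zpowers, ha]
  have hcb : Nat.card (Subgroup.zpowers b) = 3 := by rw [Nat.card_zpowers, hb]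
  rcases m with m | m
  · have := Subgroup.card_dvd_of_le haK
    rw [hca, m] at this
    norm_num at this
  · have heq := unique_three _ m haK hbK hca hcb
    have hble : Subgroup.closure {a, b} ≤ Subgroup.zpowers a := by
      rw [Subgroup.closure_le]
      intro u hu
      rcases hu with rfl | hu
      · exact Subgroup.mem_zpowers _
      · rw [Set.mem_singleton_iff] at hu
        subst hu
        rw [heq]
        exact Subgroup.mem_zpowers _
    have := Subgroup.card_dvd_of_le hble
    rw [hca, m] at this
    have := Nat.le_of_dvd (by norm_num) this
    omega

private lemma commute_of_four {a b : GA} (hab : a ∈ Subgroup.closure {a, b} → True)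
    (m : Nat.card (Subgroup.closure {a, b} : Subgroup GA) = 4) : Commute a b := by
  have h4 : Nat.card (Subgroup.closure {a, b} : Subgroup GA) = 2 ^ 2  := by rw [m]; norm_num
  have hcomm := IsPGroup.commutative_of_card_eq_prime_sq (p := 2) h4
  have hma : a ∈ Subgroup.closure ({a, b} : Set GA) := Subgroup.subset_closure (by simp)
  have hmb : b ∈ Subgroup.closure ({a, b} : Set GA) := Subgroup.subset_closure (by simp)
  have := hcomm ⟨a, hma⟩ ⟨b, hmb⟩
  have := congrArg (Subtype.val) this
  exact this

private lemma tri (x y z : GA) (hx : orderOf x = 2) (hy : orderOf y = 2) (hz : orderOf z = 2)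
    (mxy : Nat.card (Subgroup.closure {x, y} : Subgroup GA) = 4 ∨
      Nat.card (Subgroup.closure {x, y} : Subgroup GA) = 6)
    (mxz : Nat.card (Subgroup.closure {x, z} : Subgroup GA) = 4 ∨
      Nat.card (Subgroup.closure {x, z} : Subgroup GA) = 6)
    (myz : Nat.card (Subgroup.closure {y, z} : Subgroup GA) = 4 ∨
      Nat.card (Subgroup.closure {y, z} : Subgroup GA) = 6)
    (ht : Nat.card (Subgroup.closure {x, y, z} : Subgroup GA) = 12) : False := by
  set T := Subgroup.closure ({x, y, z} : Set GA) with hT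
  have hsub : ∀ {a b : GA}, ({a, b} : Set GA) ⊆ ({x, y, z} : Set GA) →
      Subgroup.closure {a, b} ≤ T := fun h => Subgroup.closure_mono h
  -- all pairs have closure of card 4
  have hp4 : ∀ {a b : GA}, ({a, b} : Set GA) ⊆ ({x, y, z} : Set GA) →
      (Nat.card (Subgroup.closure {a, b} : Subgroup GA) = 4 ∨
        Nat.card (Subgroup.closure {a, b} : Subgroup GA) = 6) →
      Nat.card (Subgroup.closure {a, b} : Subgroup GA) = 4 := by
    intro a b hss hm
    rcases hm with hm | hm
    · exact hm
    · exact absurd hm (fun hm => no_six_in_twelve _ T (hsub hss) hm ht)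
  have cxy := hp4 (by intro u; simp; tauto) mxy
  have cxz := hp4 (by intro u; simp; tauto) mxz
  have cyz := hp4 (by intro u; simp; tauto) myz
  have comm_xy : Commute x y := commute_of_four (fun _ => trivial) cxy
  have comm_xz : Commute x z := commute_of_four (fun _ => trivial) cxz
  have comm_yz : Commute y z := commute_of_four (fun _ => trivial) cyz
  -- T is commutative
  have habel : ∀ g ∈ T, ∀ t ∈ T, Commute g t := by
    have step1 : ∀ s ∈ ({x, y, z} : Set GA), T ≤ Subgroup.centralizer {s} := by
      intro s hs
      rw [hT, Subgroup.closure_le]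
      intro u hu
      rw [SetLike.mem_coe, Subgroup.mem_centralizer_iff]
      intro v hv
      rw [Set.mem_singleton_iff] at hv
      subst hv
      rcases hs with rfl | rfl | rfl <;> rcases hu with rfl | rfl | rfl <;>
        first
          | rfl
          | exact comm_xy.symm
          | exact comm_xy
          | exact comm_xz.symm
          | exact comm_xz
          | exact comm_yz.symm
          | exact comm_yz
    have step2 : T ≤ Subgroup.centralizer (T : Set GA) := by
      rw [hT, Subgroup.closure_le]
      intro s hs
      rw [SetLike.mem_coe, Subgroup.mem_centralizer_iff]
      intro t ht'
      exact (step1 s hs ht' s rfl).symm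
    intro g hg t ht'
    exact Subgroup.mem_centralizer_iff.mp (step2 ht') g hg
  -- Cauchy: an element of order 3 in T
  haveI : Fintype T := Fintype.ofFinite _
  obtain ⟨g, hg⟩ := exists_prime_orderOf_dvd_card (G := T) 3
    (by rw [← Nat.card_eq_fintype_card, ht]; norm_num)
  set P : Subgroup GA := Subgroup.zpowers (g : GA) with hPdef
  have hP3 : Nat.card P = 3 := by rw [hPdef, Nat.card_zpowers, Subgroup.orderOf_coe, hg]
  apply no_normalizer_twelve P T hP3 ht
  intro h hh
  rw [Subgroup.mem_normalizer_iff]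
  intro p
  have hcomm : ∀ q ∈ P, Commute h q := by
    intro q hq
    rw [hPdef, Subgroup.mem_zpowers_iff] at hq
    rcases hq with ⟨k, rfl⟩
    exact (habel h hh (g : GA) g.2).zpow_right k
  constructor
  · intro hp
    have hc := hcomm p hp
    rw [hc.eq, mul_assoc, mul_inv_cancel, mul_one]
    exact hp
  · intro hp
    have hc := hcomm _ hp
    have hpe : p = h⁻¹ * (h * p * h⁻¹) * h := by group
    rw [hc.inv_left.eq, mul_assoc, inv_mul_cancel, mul_one] at hpe
    rwa [hpe]

set_option maxHeartbeats 1000000 in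
private lemma key (x y z w : GA)
    (h1 : x ∉ Subgroup.closure {y, z, w}) (h2 : y ∉ Subgroup.closure {x, z, w})
    (h3 : z ∉ Subgroup.closure {x, y, w}) (h4 : w ∉ Subgroup.closure {x, y, z}) :
    False := by
  have n1 : x ∉ Subgroup.closure {y, z, w} := notin_mono h1 (by intro u hu; simp only [Set.mem_insert_iff, Set.mem_singleton_iff] at hu ⊢; tauto)
  have n2 : y ∉ Subgroup.closure {x, z, w} := notin_mono h2 (by intro u hu; simp only [Set.mem_insert_iff, Set.mem_singleton_iff] at hu ⊢; tauto)
  have n3 : z ∉ Subgroup.closure {x, y, w} := notin_mono h3 (by intro u hu; simp only [Set.mem_insert_iff, Set.mem_singleton_iff] at hu ⊢; tauto)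
  have n4 : w ∉ Subgroup.closure {x, y, z} := notin_mono h4 (by intro u hu; simp only [Set.mem_insert_iff, Set.mem_singleton_iff] at hu ⊢; tauto)
  have n5 : x ∉ Subgroup.closure {y, w, z} := notin_mono h1 (by intro u hu; simp only [Set.mem_insert_iff, Set.mem_singleton_iff] at hu ⊢; tauto)
  have n6 : y ∉ Subgroup.closure {x, w, z} := notin_mono h2 (by intro u hu; simp only [Set.mem_insert_iff, Set.mem_singleton_iff] at hu ⊢; tauto)
  have n7 : w ∉ Subgroup.closure {x, y, z} := notin_mono h4 (by intro u hu; simp only [Set.mem_insert_iff, Set.mem_singleton_iff] at hu ⊢; tauto)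
  have n8 : z ∉ Subgroup.closure {x, y, w} := notin_mono h3 (by intro u hu; simp only [Set.mem_insert_iff, Set.mem_singleton_iff] at hu ⊢; tauto)
  have n9 : x ∉ Subgroup.closure {z, w, y} := notin_mono h1 (by intro u hu; simp only [Set.mem_insert_iff, Set.mem_singleton_iff] at hu ⊢; tauto)
  have n10 : z ∉ Subgroup.closure {x, w, y} := notin_mono h3 (by intro u hu; simp only [Set.mem_insert_iff, Set.mem_singleton_iff] at hu ⊢; tauto)
  have n11 : w ∉ Subgroup.closure {x, z, y} := notin_mono h4 (by intro u hu; simp only [Set.mem_insert_iff, Set.mem_singleton_iff] at hu ⊢; tauto)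
  have n12 : y ∉ Subgroup.closure {x, z, w} := notin_mono h2 (by intro u hu; simp only [Set.mem_insert_iff, Set.mem_singleton_iff] at hu ⊢; tauto)
  have n13 : y ∉ Subgroup.closure {z, w, x} := notin_mono h2 (by intro u hu; simp only [Set.mem_insert_iff, Set.mem_singleton_iff] at hu ⊢; tauto)
  have n14 : z ∉ Subgroup.closure {y, w, x} := notin_mono h3 (by intro u hu; simp only [Set.mem_insert_iff, Set.mem_singleton_iff] at hu ⊢; tauto)
  have n15 : w ∉ Subgroup.closure {y, z, x} := notin_mono h4 (by intro u hu; simp only [Set.mem_insert_iff, Set.mem_singleton_iff] at hu ⊢; tauto)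
  have n16 : x ∉ Subgroup.closure {y, z, w} := notin_mono h1 (by intro u hu; simp only [Set.mem_insert_iff, Set.mem_singleton_iff] at hu ⊢; tauto)
  have n17 : x ∉ Subgroup.closure {w, y, z} := notin_mono h1 (by intro u hu; simp only [Set.mem_insert_iff, Set.mem_singleton_iff] at hu ⊢; tauto)
  have n18 : w ∉ Subgroup.closure {x, y, z} := notin_mono h4 (by intro u hu; simp only [Set.mem_insert_iff, Set.mem_singleton_iff] at hu ⊢; tauto)
  have n19 : y ∉ Subgroup.closure {x, w, z} := notin_mono h2 (by intro u hu; simp only [Set.mem_insert_iff, Set.mem_singleton_iff] at hu ⊢; tauto)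
  have n20 : z ∉ Subgroup.closure {x, w, y} := notin_mono h3 (by intro u hu; simp only [Set.mem_insert_iff, Set.mem_singleton_iff] at hu ⊢; tauto)
  have n21 : y ∉ Subgroup.closure {w, x, z} := notin_mono h2 (by intro u hu; simp only [Set.mem_insert_iff, Set.mem_singleton_iff] at hu ⊢; tauto)
  have n22 : w ∉ Subgroup.closure {y, x, z} := notin_mono h4 (by intro u hu; simp only [Set.mem_insert_iff, Set.mem_singleton_iff] at hu ⊢; tauto)
  have n23 : x ∉ Subgroup.closure {y, w, z} := notin_mono h1 (by intro u hu; simp only [Set.mem_insert_iff, Set.mem_singleton_iff] at hu ⊢; tauto)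
  have n24 : z ∉ Subgroup.closure {y, w, x} := notin_mono h3 (by intro u hu; simp only [Set.mem_insert_iff, Set.mem_singleton_iff] at hu ⊢; tauto)
  have n25 : z ∉ Subgroup.closure {w, x, y} := notin_mono h3 (by intro u hu; simp only [Set.mem_insert_iff, Set.mem_singleton_iff] at hu ⊢; tauto)
  have n26 : w ∉ Subgroup.closure {z, x, y} := notin_mono h4 (by intro u hu; simp only [Set.mem_insert_iff, Set.mem_singleton_iff] at hu ⊢; tauto)
  have n27 : x ∉ Subgroup.closure {z, w, y} := notin_mono h1 (by intro u hu; simp only [Set.mem_insert_iff, Set.mem_singleton_iff] at hu ⊢; tauto)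
  have n28 : y ∉ Subgroup.closure {z, w, x} := notin_mono h2 (by intro u hu; simp only [Set.mem_insert_iff, Set.mem_singleton_iff] at hu ⊢; tauto)
  have n29 : w ∉ Subgroup.closure {x, y, z} := notin_mono h4 (by intro u hu; simp only [Set.mem_insert_iff, Set.mem_singleton_iff] at hu ⊢; tauto)
  have n30 : x ∉ Subgroup.closure {w, y, z} := notin_mono h1 (by intro u hu; simp only [Set.mem_insert_iff, Set.mem_singleton_iff] at hu ⊢; tauto)
  have n31 : y ∉ Subgroup.closure {w, x, z} := notin_mono h2 (by intro u hu; simp only [Set.mem_insert_iff, Set.mem_singleton_iff] at hu ⊢; tauto)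
  have n32 : z ∉ Subgroup.closure {w, x, y} := notin_mono h3 (by intro u hu; simp only [Set.mem_insert_iff, Set.mem_singleton_iff] at hu ⊢; tauto)
  have cA := chain4 x y z w n1 n2 n3 n4
  have cB := chain4 x y w z n5 n6 n7 n8
  have cC := chain4 x z w y n9 n10 n11 n12
  have cD := chain4 y z w x n13 n14 n15 n16
  have cE := chain4 x w y z n17 n18 n19 n20
  have cF := chain4 y w x z n21 n22 n23 n24
  have cG := chain4 z w x y n25 n26 n27 n28
  have cH := chain4 w x y z n29 n30 n31 n32
  obtain ⟨ox, mxy, txyz⟩ := cA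
  obtain ⟨-, -, txyw⟩ := cB
  obtain ⟨-, mxz, txzw⟩ := cC
  obtain ⟨oy, myz, tyzw⟩ := cD
  obtain ⟨-, mxw, -⟩ := cE
  obtain ⟨-, myw, -⟩ := cF
  obtain ⟨oz, mzw, -⟩ := cG
  obtain ⟨ow, -, -⟩ := cH
  rcases ox with ox | ox
  · rcases oy with oy | oy
    · rcases oz with oz | oz
      · exact tri x y z ox oy oz mxy mxz myz txyz
      · rcases ow with ow | ow
        · exact tri x y w ox oy ow mxy mxw myw txyw
        · exact pair_not_both_three z w oz ow mzw
    · rcases oz with oz | oz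
      · rcases ow with ow | ow
        · exact tri x z w ox oz ow mxz mxw mzw txzw
        · exact pair_not_both_three y w oy ow myw
      · exact pair_not_both_three y z oy oz myz
  · rcases oy with oy | oy
    · rcases oz with oz | oz
      · rcases ow with ow | ow
        · exact tri y z w oy oz ow myz myw mzw tyzw
        · exact pair_not_both_three x w ox ow mxw
      · exact pair_not_both_three x z ox oz mxz
    · exact pair_not_both_three x y ox oy mxy

theorem minimal_generating_set_A5_card_le_three
    (S : Set (alternatingGroup (Fin 5)))
    (hgen : Subgroup.closure S = ⊤)
    (hmin : ∀ T : Set (alternatingGroup (Fin 5)), T ⊂ S → Subgroup.closure T ≠ ⊤) :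
    S.Finite ∧ S.ncard ≤ 3 := by
  refine ⟨Set.toFinite S, ?_⟩
  by_contra hcon
  push_neg at hcon
  have hv : ∀ v ∈ S, v ∉ Subgroup.closure (S \ {v}) := by
    intro v hvS hmem
    apply hmin (S \ {v}) (Set.sdiff_singleton_ssubset.mpr hvS)
    have hle : Subgroup.closure S ≤ Subgroup.closure (S \ {v}) := by
      rw [Subgroup.closure_le]
      intro u hu
      by_cases he : u = v
      · subst he; exact hmem
      · exact Subgroup.subset_closure ⟨hu, he⟩
    rw [hgen] at hle
    exact top_le_iff.mp hle
  obtain ⟨a, ha⟩ : S.Nonempty := Set.nonempty_of_ncard_ne_zero (by omega)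
  have hn1 : (S \ {a}).ncard = S.ncard - 1 := Set.ncard_diff_singleton_of_mem ha
  obtain ⟨b, hb⟩ : (S \ {a}).Nonempty := Set.nonempty_of_ncard_ne_zero (by omega)
  have hn2 : ((S \ {a}) \ {b}).ncard = (S \ {a}).ncard - 1 :=
    Set.ncard_diff_singleton_of_mem hb
  obtain ⟨c, hc⟩ : ((S \ {a}) \ {b}).Nonempty := Set.nonempty_of_ncard_ne_zero (by omega)
  have hn3 : (((S \ {a}) \ {b}) \ {c}).ncard = ((S \ {a}) \ {b}).ncard - 1 :=
    Set.ncard_diff_singleton_of_mem hc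
  obtain ⟨d, hd⟩ : (((S \ {a}) \ {b}) \ {c}).Nonempty :=
    Set.nonempty_of_ncard_ne_zero (by omega)
  have hbS : b ∈ S := hb.1
  have hba : b ≠ a := by simpa using hb.2
  have hcS : c ∈ S := hc.1.1
  have hca : c ≠ a := by simpa using hc.1.2
  have hcb : c ≠ b := by simpa using hc.2
  have hdS : d ∈ S := hd.1.1.1
  have hda : d ≠ a := by simpa using hd.1.1.2
  have hdb : d ≠ b := by simpa using hd.1.2
  have hdc : d ≠ c := by simpa using hd.2
  apply key a b c d
  · refine notin_mono (hv a ha) ?_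
    intro u hu
    simp only [Set.mem_insert_iff, Set.mem_singleton_iff] at hu
    rcases hu with rfl | rfl | rfl
    · exact ⟨hbS, by simpa using hba⟩
    · exact ⟨hcS, by simpa using hca⟩
    · exact ⟨hdS, by simpa using hda⟩
  · refine notin_mono (hv b hbS) ?_
    intro u hu
    simp only [Set.mem_insert_iff, Set.mem_singleton_iff] at hu
    rcases hu with rfl | rfl | rfl
    · exact ⟨ha, by simpa using hba.symm⟩
    · exact ⟨hcS, by simpa using hcb⟩
    · exact ⟨hdS, by simpa using hdb⟩
  · refine notin_mono (hv c hcS) ?_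
    intro u hu
    simp only [Set.mem_insert_iff, Set.mem_singleton_iff] at hu
    rcases hu with rfl | rfl | rfl
    · exact ⟨ha, by simpa using hca.symm⟩
    · exact ⟨hbS, by simpa using hcb.symm⟩
    · exact ⟨hdS, by simpa using hdc⟩
  · refine notin_mono (hv d hdS) ?_
    intro u hu
    simp only [Set.mem_insert_iff, Set.mem_singleton_iff] at hu
    rcases hu with rfl | rfl | rfl
    · exact ⟨ha, by simpa using hda.symm⟩
    · exact ⟨hbS, by simpa using hdb.symm⟩
    · exact ⟨hcS, by simpa using hdc.symm⟩
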